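/- Let K ⊆ V be a nonempty cone, let F be a face of co K, and let J ∈ F̂(K). Then J ∩ F ∈ F̂(K); that is, co(K ∩ J ∩ F) = J ∩ F. -/
import Mathlib


open RealInnerProductSpace

variable {V : Type*} [NormedAddCommGroup V] [InnerProductSpace ℝ V]

/-- A (not necessarily convex or closed) cone: closed under nonnegative scaling. -/
def IsCone (C : Set V) : Prop := ∀ X ∈ C, ∀ l : ℝ, 0 ≤ l → l • X ∈ C

/-- `F̂(K)`: the family of all convex cones `J ⊆ co K` with `co (K ∩ J) = J`. -/
def Fhat (K : Set V) : Set (Set V) :=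
  {J | Convex ℝ J ∧ IsCone J ∧ J ⊆ convexHull ℝ K ∧ convexHull ℝ (K ∩ J) = J}

/-- `F` is a face of the convex cone `C`: `F` is a convex cone contained in `C`, and
whenever a finite sum of elements of `C` lies in `F`, each summand lies in `F`. -/
def IsFace (C F : Set V) : Prop :=
  F ⊆ C ∧ Convex ℝ F ∧ IsCone F ∧
    ∀ (m : ℕ) (X : Fin m → V), (∀ k, X k ∈ C) → (∑ k, X k) ∈ F → ∀ k, X k ∈ F

/-- Theorem 3.1 (ii): for every face `F` of `co K` and every `J ∈ F̂(K)`,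
`J ∩ F ∈ F̂(K)`; in particular `co (K ∩ J ∩ F) = J ∩ F`. -/
theorem stmt_9 [FiniteDimensional ℝ V] (K J F : Set V)
    (hKne : K.Nonempty) (hKcone : IsCone K)
    (hF : IsFace (convexHull ℝ K) F) (hJ : J ∈ Fhat K) :
    J ∩ F ∈ Fhat K ∧ convexHull ℝ (K ∩ J ∩ F) = J ∩ F := by
  obtain ⟨hJconv, hJcone, hJsub, hJeq⟩ := hJ
  obtain ⟨hFsub, hFconv, hFcone, hFface⟩ := hF
  have key : convexHull ℝ (K ∩ J ∩ F) = J ∩ F := by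
    apply Set.Subset.antisymm
    · apply Set.subset_inter
      · calc convexHull ℝ (K ∩ J ∩ F) ⊆ convexHull ℝ (K ∩ J) :=
              convexHull_mono (fun x hx => ⟨hx.1.1, hx.1.2⟩)
          _ = J := hJeq
      · calc convexHull ℝ (K ∩ J ∩ F) ⊆ convexHull ℝ F :=
              convexHull_mono Set.inter_subset_right
          _ = F := hFconv.convexHull_eq
    · rintro x ⟨hxJ, hxF⟩
      have hxJ' : x ∈ convexHull ℝ (K ∩ J) := by rw [hJeq]; exact hxJ
      rw [convexHull_eq] at hxJ'
      obtain ⟨ι, t, w, z, hw0, hw1, hz, hx⟩ := hxJ'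
      have hsum : ∑ i ∈ t, w i • z i = x := by
        rw [← Finset.centerMass_eq_of_sum_1 t z hw1]; exact hx
      -- each w i • z i belongs to F by the face property
      have hmem : ∀ i ∈ t, w i • z i ∈ F := by
        intro i hi
        set e := t.equivFin
        have hXF := hFface t.card (fun k => w (e.symm k).1 • z (e.symm k).1)
          (fun k => by
            have hzk := hz _ (e.symm k).2
            exact subset_convexHull ℝ K (hKcone _ hzk.1 _ (hw0 _ (e.symm k).2)))
          (by
            have : ∑ k, w (e.symm k).1 • z (e.symm k).1
                = ∑ i ∈ t, w i • z i := by
              rw [← Finset.sum_attach t (fun i => w i • z i)]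
              exact Fintype.sum_equiv e.symm _ _ (fun k => rfl)
            rw [this, hsum]; exact hxF)
        have := hXF (e ⟨i, hi⟩)
        simpa using this
      -- nonzero-weight points are in F (cone)
      have hzF : ∀ i ∈ t, w i ≠ 0 → z i ∈ K ∩ J ∩ F := by
        intro i hi hwi
        have hwi' : 0 < w i := lt_of_le_of_ne (hw0 i hi) (Ne.symm hwi)
        have : (w i)⁻¹ • (w i • z i) ∈ F :=
          hFcone _ (hmem i hi) _ (inv_nonneg.mpr hwi'.le)
        rw [smul_smul, inv_mul_cancel₀ hwi, one_smul] at this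
        exact ⟨hz i hi, this⟩
      -- conclude via centerMass over the nonzero weights
      have hxc : (t.filter (fun i => w i ≠ 0)).centerMass w z = x := by
        rw [Finset.centerMass_filter_ne_zero]; exact hx
      rw [← hxc]
      apply Finset.centerMass_mem_convexHull
      · intro i hi; exact hw0 i (Finset.mem_filter.mp hi).1
      · have : ∑ i ∈ t.filter (fun i => w i ≠ 0), w i = 1 := by
          rw [Finset.sum_filter_ne_zero]; exact hw1
        rw [this]; exact one_pos
      · intro i hi
        obtain ⟨hit, hwi⟩ := Finset.mem_filter.mp hi
        exact hzF i hit hwi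
  have key' : convexHull ℝ (K ∩ (J ∩ F)) = J ∩ F := by
    rw [← Set.inter_assoc]; exact key
  refine ⟨⟨hJconv.inter hFconv, ?_, fun x hx => hJsub hx.1, key'⟩, key⟩
  intro x hx l hl
  exact ⟨hJcone _ hx.1 _ hl, hFcone _ hx.2 _ hl⟩
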